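/- Let X be a set, K : X × X → ℂ, and let x₁, …, x_{n+1} ∈ X be pairwise distinct points such that both the kernel matrix K[x] at x₁, …, xₙ and the kernel matrix at x₁, …, x_{n+1} are nonsingular. Then the following are equivalent: (i) ‖K[x]^{-1} K_x(x_{n+1})‖₁ ≤ 1; (ii) for every y ∈ ℂⁿ and every c ∈ ℂ^{n+1} satisfying ∑_{j=1}^{n+1} c_j K(x_j, x_i) = y_i for all i ∈ {1, …, n}, one has ‖c‖₁ ≥ ‖K[x]^{-1} y‖₁. -/

import Mathlib

open Matrix

/-- The kernel matrix `K[x]`, with `(j,k)` entry `K(x_k, x_j)`. -/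
noncomputable def kernelMatrix {X : Type*} (K : X → X → ℂ) {n : ℕ} (x : Fin n → X) :
    Matrix (Fin n) (Fin n) ℂ := Matrix.of fun j k => K (x k) (x j)

/-- The vector `K_x(t)`, with `j`-th entry `K(t, x_j)`. -/
noncomputable def kernelVec {X : Type*} (K : X → X → ℂ) {n : ℕ} (x : Fin n → X) (t : X) :
    Fin n → ℂ := fun j => K t (x j)

/-- The `ℓ¹` norm of a vector in `ℂⁿ`. -/
noncomputable def l1norm {n : ℕ} (v : Fin n → ℂ) : ℝ := ∑ j, ‖v j‖

theorem stmt_5 {X : Type*} (K : X → X → ℂ) (n : ℕ) (x : Fin (n + 1) → X)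
    (hx : Function.Injective x)
    (hA : IsUnit (kernelMatrix K (fun i : Fin n => x i.castSucc)).det)
    (hA' : IsUnit (kernelMatrix K x).det) :
    (l1norm ((kernelMatrix K (fun i : Fin n => x i.castSucc))⁻¹ *ᵥ
        kernelVec K (fun i : Fin n => x i.castSucc) (x (Fin.last n))) ≤ 1)
      ↔
    (∀ (y : Fin n → ℂ) (c : Fin (n + 1) → ℂ),
      (∀ i : Fin n, ∑ j, c j * K (x j) (x i.castSucc) = y i) →
      l1norm ((kernelMatrix K (fun i : Fin n => x i.castSucc))⁻¹ *ᵥ y) ≤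
        ∑ j, ‖c j‖) := by
  set A := kernelMatrix K (fun i : Fin n => x i.castSucc) with hAdef
  set v := kernelVec K (fun i : Fin n => x i.castSucc) (x (Fin.last n)) with hvdef
  constructor
  · intro h y c hc
    set c' : Fin n → ℂ := fun i => c i.castSucc with hc'
    have key : A *ᵥ c' + c (Fin.last n) • v = y := by
      funext i
      have h1 := hc i
      rw [Fin.sum_univ_castSucc] at h1
      simpa [A, v, kernelMatrix, kernelVec, mulVec, dotProduct, c', mul_comm] using h1
    have hinv : A⁻¹ *ᵥ y = c' + c (Fin.last n) • (A⁻¹ *ᵥ v) := by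
      rw [← key, mulVec_add, mulVec_smul, mulVec_mulVec, nonsing_inv_mul A hA, one_mulVec]
    rw [hinv]
    calc l1norm (c' + c (Fin.last n) • (A⁻¹ *ᵥ v))
        ≤ ∑ j, (‖c' j‖ + ‖c (Fin.last n)‖ * ‖(A⁻¹ *ᵥ v) j‖) := by
          apply Finset.sum_le_sum
          intro j _
          simpa [norm_mul] using norm_add_le (c' j) (c (Fin.last n) * (A⁻¹ *ᵥ v) j)
      _ = (∑ j, ‖c' j‖) + ‖c (Fin.last n)‖ * l1norm (A⁻¹ *ᵥ v) := by
          rw [Finset.sum_add_distrib, ← Finset.mul_sum]; rfl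
      _ ≤ (∑ j, ‖c' j‖) + ‖c (Fin.last n)‖ * 1 := by
          gcongr
      _ = ∑ j, ‖c j‖ := by
          rw [Fin.sum_univ_castSucc, mul_one]
  · intro h
    have := h v (Pi.single (Fin.last n) 1) (fun i => by
      simp [Pi.single_apply, v, kernelVec])
    simpa [Pi.single_apply, apply_ite (fun z : ℂ => ‖z‖), Finset.sum_ite_eq'] using this
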